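/- arXiv:2409.19160 — 2 statements merged into one kernel-verified Lean document; each statement's English description precedes it below -/
import Mathlib

section
/- Fix t ∈ ℝ. There exist h₀ > 0, s₀ > 0 and C > 0 such that for all h with |h| ≤ h₀ and all s with |s| ≤ s₀, writing x = γ(t) + h·n(t), y = γ(t+s), r = x − y, κ = κ(t), κ′ = κ′(t), the following hold: (1) |‖r‖² − h² − s²(1 + hκ) − (h/3)κ′s³| ≤ C s⁴; (2) |r·n(t) − h − (κ/2)s² − (κ′/6)s³| ≤ C s⁴; (3) |r·n(t+s) − h + (s²/2)(κ + hκ²)| ≤ C s³; (4) |r·τ(t) + s − (κ²/6)s³| ≤ C s⁴; (5) |r·τ(t+s) + (1 + hκ)s + (s²/2)hκ′| ≤ C s³; (6) |n(t)·n(t+s) − 1 + (κ²/2)s²| ≤ C s³ and |τ(t)·τ(t+s) − 1 + (κ²/2)s²| ≤ C s³; (7) |n(t)·τ(t+s) + κs + (κ′/2)s²| ≤ C s³. In particular the constant C can be chosen independent of h for |h| ≤ h₀. -/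
open Real Filter Topology MeasureTheory

noncomputable section

/-- Euclidean dot product on `ℝ × ℝ`. -/
def dot2 (v w : ℝ × ℝ) : ℝ := v.1 * w.1 + v.2 * w.2

/-- Unit tangent vector `τ(s) = γ′(s)`. -/
def tang (γ : ℝ → ℝ × ℝ) (s : ℝ) : ℝ × ℝ := deriv γ s

/-- Unit normal vector `n(s) = (τ₂(s), −τ₁(s))`. -/
def nor (γ : ℝ → ℝ × ℝ) (s : ℝ) : ℝ × ℝ := ((deriv γ s).2, -(deriv γ s).1)

/-- Signed curvature `κ(s) = −γ″(s)·n(s)`. -/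
def curv (γ : ℝ → ℝ × ℝ) (s : ℝ) : ℝ := -(dot2 (deriv (deriv γ) s) (nor γ s))

lemma poly_bound : ∀ (k : ℕ) (F : ℝ → ℝ), ContDiff ℝ (⊤ : ℕ∞) F →
    (∀ j < k, deriv^[j] F 0 = 0) →
    ∃ C > (0:ℝ), ∀ s : ℝ, |s| ≤ 1 → |F s| ≤ C * |s| ^ k := by
  intro k
  induction k with
  | zero =>
    intro F hF _
    obtain ⟨C, hC⟩ := (isCompact_Icc (a := (-1:ℝ)) (b := 1)).exists_bound_of_continuousOn
      (hF.continuous.continuousOn)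
    have hC0 : (0:ℝ) ≤ C := (norm_nonneg (F 0)).trans (hC 0 (by norm_num))
    refine ⟨C + 1, by linarith, fun s hs => ?_⟩
    have := hC s (by rw [Set.mem_Icc]; constructor <;> [linarith [neg_abs_le s]; linarith [le_abs_self s]])
    simp only [pow_zero, mul_one]
    calc |F s| ≤ C := this
      _ ≤ C + 1 := by linarith
  | succ n ih =>
    intro F hF hz
    obtain ⟨C, hC, hB⟩ := ih (deriv F) ((contDiff_infty_iff_deriv.mp hF).2)
      (fun j hj => by
        rw [← Function.iterate_succ_apply]
        exact hz (j+1) (by omega))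
    refine ⟨C, hC, fun s hs => ?_⟩
    have h0 : F 0 = 0 := hz 0 (by omega)
    have hdiff : Differentiable ℝ F := hF.differentiable (by simp)
    have key : ‖F s - F 0‖ ≤ C * |s|^n * ‖s - 0‖ := by
      apply (convex_Icc (-|s|) |s|).norm_image_sub_le_of_norm_deriv_le
        (fun x _ => hdiff x)
        (fun x hx => ?_)
        (by rw [Set.mem_Icc]; constructor <;> simp [neg_abs_le, abs_nonneg])
        (by rw [Set.mem_Icc]; exact ⟨neg_abs_le s, le_abs_self s⟩)
      rw [Set.mem_Icc] at hx
      have hxs : |x| ≤ |s| := abs_le.2 hx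
      calc ‖deriv F x‖ ≤ C * |x|^n := hB x (hxs.trans hs)
        _ ≤ C * |s|^n := by
          gcongr
    rw [h0, sub_zero, sub_zero] at key
    calc |F s| ≤ C * |s|^n * |s| := key
      _ = C * |s|^(n+1) := by ring

set_option maxHeartbeats 1000000 in
lemma curveEst (p q v w c cd : ℝ → ℝ)
    (hps : ContDiff ℝ (⊤:ℕ∞) p) (hqs : ContDiff ℝ (⊤:ℕ∞) q)
    (hvs : ContDiff ℝ (⊤:ℕ∞) v) (hws : ContDiff ℝ (⊤:ℕ∞) w)
    (hcs : ContDiff ℝ (⊤:ℕ∞) c)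
    (hp : ∀ x, HasDerivAt p (-(v x)) x) (hq : ∀ x, HasDerivAt q (-(w x)) x)
    (hv : ∀ x, HasDerivAt v (-(c x * w x)) x) (hw : ∀ x, HasDerivAt w (c x * v x) x)
    (hc : ∀ x, HasDerivAt c (cd x) x)
    (hunit : ∀ x, v x ^ 2 + w x ^ 2 = 1) (hp0 : p 0 = 0) (hq0 : q 0 = 0) :
    ∃ C > (0:ℝ), ∀ h : ℝ, |h| ≤ 1 → ∀ s : ℝ, |s| ≤ 1 →
      |p s^2 + q s^2 - s^2 + 2*h*(p s * w 0 - q s * v 0 - c 0/2 * s^2 - cd 0/6 * s^3)| ≤ C * |s|^4 ∧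
      |p s * w 0 - q s * v 0 - c 0/2 * s^2 - cd 0/6 * s^3| ≤ C * |s|^4 ∧
      |p s * w s - q s * v s + c 0/2 * s^2 + h*(w 0 * w s + v 0 * v s - 1 + c 0^2/2 * s^2)| ≤ C * |s|^3 ∧
      |p s * v 0 + q s * w 0 + s - c 0^2/6 * s^3| ≤ C * |s|^4 ∧
      |p s * v s + q s * w s + s + h*(w 0 * v s - v 0 * w s + c 0 * s + cd 0/2 * s^2)| ≤ C * |s|^3 ∧
      |w 0 * w s + v 0 * v s - 1 + c 0^2/2 * s^2| ≤ C * |s|^3 ∧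
      |v 0 * v s + w 0 * w s - 1 + c 0^2/2 * s^2| ≤ C * |s|^3 ∧
      |w 0 * v s - v 0 * w s + c 0 * s + cd 0/2 * s^2| ≤ C * |s|^3 := by
  have hu : v 0 ^ 2 + w 0 ^ 2 = 1 := hunit 0
  -- F1
  have l11 : ∀ x, HasDerivAt (fun s => p s^2 + q s^2 - s^2)
      (-(2*(p x*v x)) - 2*(q x*w x) - 2*x) x := by
    intro x
    have h := (((hp x).pow 2).add ((hq x).pow 2)).sub (hasDerivAt_pow 2 x)
    refine h.congr_deriv (Eq.symm ?_)
    ring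
  have l12 : ∀ x, HasDerivAt (fun x => -(2*(p x*v x)) - 2*(q x*w x) - 2*x)
      (2*(p x*(c x*w x)) - 2*(q x*(c x*v x))) x := by
    intro x
    have h := ((((hp x).mul (hv x)).const_mul 2).neg.sub
      (((hq x).mul (hw x)).const_mul 2)).sub ((hasDerivAt_id x).const_mul 2)
    refine h.congr_deriv (Eq.symm ?_)
    linear_combination (-2 : ℝ) * hunit x
  have d11 : deriv (fun s => p s^2 + q s^2 - s^2)
      = fun x => -(2*(p x*v x)) - 2*(q x*w x) - 2*x := funext fun x => (l11 x).deriv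
  have d12 : deriv (fun x => -(2*(p x*v x)) - 2*(q x*w x) - 2*x)
      = fun x => 2*(p x*(c x*w x)) - 2*(q x*(c x*v x)) := funext fun x => (l12 x).deriv
  obtain ⟨C1, hC1pos, hC1⟩ := poly_bound 4 (fun s => p s^2 + q s^2 - s^2)
    (by fun_prop) (by
      intro j hj
      interval_cases j
      · simp [hp0, hq0]
      · simp only [Function.iterate_one, d11]
        simp [hp0, hq0]
      · rw [show deriv^[2] (fun s => p s^2 + q s^2 - s^2)
            = deriv (deriv (fun s => p s^2 + q s^2 - s^2)) from by
          rw [Function.iterate_succ_apply, Function.iterate_one]]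
        rw [d11, d12]
        simp [hp0, hq0]
      · rw [show deriv^[3] (fun s => p s^2 + q s^2 - s^2)
            = deriv (deriv (deriv (fun s => p s^2 + q s^2 - s^2))) from by
          rw [Function.iterate_succ_apply, Function.iterate_succ_apply, Function.iterate_one]]
        rw [d11, d12]
        have l13 : HasDerivAt (fun x => 2*(p x*(c x*w x)) - 2*(q x*(c x*v x))) 0 0 := by
          have h := (((hp 0).mul ((hc 0).mul (hw 0))).const_mul 2).sub
            (((hq 0).mul ((hc 0).mul (hv 0))).const_mul 2)
          refine h.congr_deriv (Eq.symm ?_)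
          simp only [Pi.mul_apply]
          rw [hp0, hq0]; ring
        exact l13.deriv)
  -- F2
  have l21 : ∀ x, HasDerivAt (fun s => p s * w 0 - q s * v 0 - c 0/2 * s^2 - cd 0/6 * s^3)
      (-(v x) * w 0 + w x * v 0 - c 0 * x - cd 0/2 * x^2) x := by
    intro x
    have h := ((((hp x).mul_const (w 0)).sub ((hq x).mul_const (v 0))).sub
      ((hasDerivAt_pow 2 x).const_mul (c 0/2))).sub ((hasDerivAt_pow 3 x).const_mul (cd 0/6))
    refine h.congr_deriv (Eq.symm ?_)
    ring
  have l22 : ∀ x, HasDerivAt (fun x => -(v x) * w 0 + w x * v 0 - c 0 * x - cd 0/2 * x^2)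
      (c x * w x * w 0 + c x * v x * v 0 - c 0 - cd 0 * x) x := by
    intro x
    have h := ((((hv x).neg.mul_const (w 0)).add ((hw x).mul_const (v 0))).sub
      ((hasDerivAt_id x).const_mul (c 0))).sub ((hasDerivAt_pow 2 x).const_mul (cd 0/2))
    refine h.congr_deriv (Eq.symm ?_)
    ring
  have d21 : deriv (fun s => p s * w 0 - q s * v 0 - c 0/2 * s^2 - cd 0/6 * s^3)
      = fun x => -(v x) * w 0 + w x * v 0 - c 0 * x - cd 0/2 * x^2 := funext fun x => (l21 x).deriv
  have d22 : deriv (fun x => -(v x) * w 0 + w x * v 0 - c 0 * x - cd 0/2 * x^2)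
      = fun x => c x * w x * w 0 + c x * v x * v 0 - c 0 - cd 0 * x := funext fun x => (l22 x).deriv
  obtain ⟨C2, hC2pos, hC2⟩ := poly_bound 4
    (fun s => p s * w 0 - q s * v 0 - c 0/2 * s^2 - cd 0/6 * s^3)
    (by fun_prop) (by
      intro j hj
      interval_cases j
      · simp [hp0, hq0]
      · simp only [Function.iterate_one, d21]
        simp; ring
      · rw [show deriv^[2] (fun s => p s * w 0 - q s * v 0 - c 0/2 * s^2 - cd 0/6 * s^3)
            = deriv (deriv (fun s => p s * w 0 - q s * v 0 - c 0/2 * s^2 - cd 0/6 * s^3)) from by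
          rw [Function.iterate_succ_apply, Function.iterate_one]]
        rw [d21, d22]
        show c 0 * w 0 * w 0 + c 0 * v 0 * v 0 - c 0 - cd 0 * 0 = 0
        linear_combination c 0 * hu
      · rw [show deriv^[3] (fun s => p s * w 0 - q s * v 0 - c 0/2 * s^2 - cd 0/6 * s^3)
            = deriv (deriv (deriv (fun s => p s * w 0 - q s * v 0 - c 0/2 * s^2 - cd 0/6 * s^3))) from by
          rw [Function.iterate_succ_apply, Function.iterate_succ_apply, Function.iterate_one]]
        rw [d21, d22]
        have l23 : HasDerivAt (fun x => c x * w x * w 0 + c x * v x * v 0 - c 0 - cd 0 * x) 0 0 := by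
          have h := (((((hc 0).mul (hw 0)).mul_const (w 0)).add
            (((hc 0).mul (hv 0)).mul_const (v 0))).sub_const (c 0)).sub
            ((hasDerivAt_id 0).const_mul (cd 0))
          refine h.congr_deriv (Eq.symm ?_)
          linear_combination (-(cd 0)) * hu
        exact l23.deriv)
  -- F3
  have l31 : ∀ x, HasDerivAt (fun s => p s * w s - q s * v s + c 0/2 * s^2)
      (p x*(c x*v x) + q x*(c x*w x) + c 0*x) x := by
    intro x
    have h := (((hp x).mul (hw x)).sub ((hq x).mul (hv x))).add
      ((hasDerivAt_pow 2 x).const_mul (c 0/2))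
    refine h.congr_deriv (Eq.symm ?_)
    ring
  have d31 : deriv (fun s => p s * w s - q s * v s + c 0/2 * s^2)
      = fun x => p x*(c x*v x) + q x*(c x*w x) + c 0*x := funext fun x => (l31 x).deriv
  obtain ⟨C3, hC3pos, hC3⟩ := poly_bound 3
    (fun s => p s * w s - q s * v s + c 0/2 * s^2)
    (by fun_prop) (by
      intro j hj
      interval_cases j
      · simp [hp0, hq0]
      · simp only [Function.iterate_one, d31]
        simp [hp0, hq0]
      · rw [show deriv^[2] (fun s => p s * w s - q s * v s + c 0/2 * s^2)
            = deriv (deriv (fun s => p s * w s - q s * v s + c 0/2 * s^2)) from by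
          rw [Function.iterate_succ_apply, Function.iterate_one]]
        rw [d31]
        have l32 : HasDerivAt (fun x => p x*(c x*v x) + q x*(c x*w x) + c 0*x) 0 0 := by
          have h := (((hp 0).mul ((hc 0).mul (hv 0))).add
            ((hq 0).mul ((hc 0).mul (hw 0)))).add ((hasDerivAt_id 0).const_mul (c 0))
          refine h.congr_deriv (Eq.symm ?_)
          simp only [Pi.mul_apply]
          rw [hp0, hq0]
          linear_combination (c 0) * hu
        exact l32.deriv)
  -- Q3
  have l41 : ∀ x, HasDerivAt (fun s => w 0 * w s + v 0 * v s - 1 + c 0^2/2 * s^2)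
      (w 0*(c x*v x) - v 0*(c x*w x) + c 0^2*x) x := by
    intro x
    have h := ((((hw x).const_mul (w 0)).add ((hv x).const_mul (v 0))).sub_const 1).add
      ((hasDerivAt_pow 2 x).const_mul (c 0^2/2))
    refine h.congr_deriv (Eq.symm ?_)
    ring
  have d41 : deriv (fun s => w 0 * w s + v 0 * v s - 1 + c 0^2/2 * s^2)
      = fun x => w 0*(c x*v x) - v 0*(c x*w x) + c 0^2*x := funext fun x => (l41 x).deriv
  obtain ⟨C4, hC4pos, hC4⟩ := poly_bound 3
    (fun s => w 0 * w s + v 0 * v s - 1 + c 0^2/2 * s^2)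
    (by fun_prop) (by
      intro j hj
      interval_cases j
      · show w 0 * w 0 + v 0 * v 0 - 1 + c 0^2/2 * 0^2 = 0
        linear_combination hu
      · simp only [Function.iterate_one, d41]
        show w 0*(c 0*v 0) - v 0*(c 0*w 0) + c 0^2*0 = 0
        ring
      · rw [show deriv^[2] (fun s => w 0 * w s + v 0 * v s - 1 + c 0^2/2 * s^2)
            = deriv (deriv (fun s => w 0 * w s + v 0 * v s - 1 + c 0^2/2 * s^2)) from by
          rw [Function.iterate_succ_apply, Function.iterate_one]]
        rw [d41]
        have l42 : HasDerivAt (fun x => w 0*(c x*v x) - v 0*(c x*w x) + c 0^2*x) 0 0 := by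
          have h := ((((hc 0).mul (hv 0)).const_mul (w 0)).sub
            (((hc 0).mul (hw 0)).const_mul (v 0))).add ((hasDerivAt_id 0).const_mul (c 0^2))
          refine h.congr_deriv (Eq.symm ?_)
          linear_combination (c 0^2) * hu
        exact l42.deriv)
  -- F4
  have l51 : ∀ x, HasDerivAt (fun s => p s * v 0 + q s * w 0 + s - c 0^2/6 * s^3)
      (-(v x)*v 0 - w x*w 0 + 1 - c 0^2/2*x^2) x := by
    intro x
    have h := ((((hp x).mul_const (v 0)).add ((hq x).mul_const (w 0))).add
      (hasDerivAt_id x)).sub ((hasDerivAt_pow 3 x).const_mul (c 0^2/6))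
    refine h.congr_deriv (Eq.symm ?_)
    ring
  have l52 : ∀ x, HasDerivAt (fun x => -(v x)*v 0 - w x*w 0 + 1 - c 0^2/2*x^2)
      (c x*w x*v 0 - c x*v x*w 0 - c 0^2*x) x := by
    intro x
    have h := ((((hv x).neg.mul_const (v 0)).sub ((hw x).mul_const (w 0))).add_const 1).sub
      ((hasDerivAt_pow 2 x).const_mul (c 0^2/2))
    refine h.congr_deriv (Eq.symm ?_)
    ring
  have d51 : deriv (fun s => p s * v 0 + q s * w 0 + s - c 0^2/6 * s^3)
      = fun x => -(v x)*v 0 - w x*w 0 + 1 - c 0^2/2*x^2 := funext fun x => (l51 x).deriv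
  have d52 : deriv (fun x => -(v x)*v 0 - w x*w 0 + 1 - c 0^2/2*x^2)
      = fun x => c x*w x*v 0 - c x*v x*w 0 - c 0^2*x := funext fun x => (l52 x).deriv
  obtain ⟨C5, hC5pos, hC5⟩ := poly_bound 4
    (fun s => p s * v 0 + q s * w 0 + s - c 0^2/6 * s^3)
    (by fun_prop) (by
      intro j hj
      interval_cases j
      · simp [hp0, hq0]
      · simp only [Function.iterate_one, d51]
        show -(v 0)*v 0 - w 0*w 0 + 1 - c 0^2/2*0^2 = 0
        linear_combination -hu
      · rw [show deriv^[2] (fun s => p s * v 0 + q s * w 0 + s - c 0^2/6 * s^3)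
            = deriv (deriv (fun s => p s * v 0 + q s * w 0 + s - c 0^2/6 * s^3)) from by
          rw [Function.iterate_succ_apply, Function.iterate_one]]
        rw [d51, d52]
        show c 0*w 0*v 0 - c 0*v 0*w 0 - c 0^2*0 = 0
        ring
      · rw [show deriv^[3] (fun s => p s * v 0 + q s * w 0 + s - c 0^2/6 * s^3)
            = deriv (deriv (deriv (fun s => p s * v 0 + q s * w 0 + s - c 0^2/6 * s^3))) from by
          rw [Function.iterate_succ_apply, Function.iterate_succ_apply, Function.iterate_one]]
        rw [d51, d52]
        have l53 : HasDerivAt (fun x => c x*w x*v 0 - c x*v x*w 0 - c 0^2*x) 0 0 := by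
          have h := (((((hc 0).mul (hw 0)).mul_const (v 0)).sub
            (((hc 0).mul (hv 0)).mul_const (w 0)))).sub ((hasDerivAt_id 0).const_mul (c 0^2))
          refine h.congr_deriv (Eq.symm ?_)
          linear_combination (-(c 0^2)) * hu
        exact l53.deriv)
  -- F5
  have l61 : ∀ x, HasDerivAt (fun s => p s * v s + q s * w s + s)
      (-(p x*(c x*w x)) + q x*(c x*v x)) x := by
    intro x
    have h := (((hp x).mul (hv x)).add ((hq x).mul (hw x))).add (hasDerivAt_id x)
    refine h.congr_deriv (Eq.symm ?_)
    linear_combination hunit x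
  have d61 : deriv (fun s => p s * v s + q s * w s + s)
      = fun x => -(p x*(c x*w x)) + q x*(c x*v x) := funext fun x => (l61 x).deriv
  obtain ⟨C6, hC6pos, hC6⟩ := poly_bound 3
    (fun s => p s * v s + q s * w s + s)
    (by fun_prop) (by
      intro j hj
      interval_cases j
      · simp [hp0, hq0]
      · simp only [Function.iterate_one, d61]
        simp [hp0, hq0]
      · rw [show deriv^[2] (fun s => p s * v s + q s * w s + s)
            = deriv (deriv (fun s => p s * v s + q s * w s + s)) from by
          rw [Function.iterate_succ_apply, Function.iterate_one]]
        rw [d61]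
        have l62 : HasDerivAt (fun x => -(p x*(c x*w x)) + q x*(c x*v x)) 0 0 := by
          have h := ((hp 0).mul ((hc 0).mul (hw 0))).neg.add
            ((hq 0).mul ((hc 0).mul (hv 0)))
          refine h.congr_deriv (Eq.symm ?_)
          simp only [Pi.mul_apply]
          rw [hp0, hq0]; ring
        exact l62.deriv)
  -- Q5
  have l71 : ∀ x, HasDerivAt (fun s => w 0 * v s - v 0 * w s + c 0 * s + cd 0/2 * s^2)
      (-(w 0*(c x*w x)) - v 0*(c x*v x) + c 0 + cd 0*x) x := by
    intro x
    have h := ((((hv x).const_mul (w 0)).sub ((hw x).const_mul (v 0))).add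
      ((hasDerivAt_id x).const_mul (c 0))).add ((hasDerivAt_pow 2 x).const_mul (cd 0/2))
    refine h.congr_deriv (Eq.symm ?_)
    ring
  have d71 : deriv (fun s => w 0 * v s - v 0 * w s + c 0 * s + cd 0/2 * s^2)
      = fun x => -(w 0*(c x*w x)) - v 0*(c x*v x) + c 0 + cd 0*x := funext fun x => (l71 x).deriv
  obtain ⟨C7, hC7pos, hC7⟩ := poly_bound 3
    (fun s => w 0 * v s - v 0 * w s + c 0 * s + cd 0/2 * s^2)
    (by fun_prop) (by
      intro j hj
      interval_cases j
      · show w 0 * v 0 - v 0 * w 0 + c 0 * 0 + cd 0/2 * 0^2 = 0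
        ring
      · simp only [Function.iterate_one, d71]
        show -(w 0*(c 0*w 0)) - v 0*(c 0*v 0) + c 0 + cd 0*0 = 0
        linear_combination (-(c 0)) * hu
      · rw [show deriv^[2] (fun s => w 0 * v s - v 0 * w s + c 0 * s + cd 0/2 * s^2)
            = deriv (deriv (fun s => w 0 * v s - v 0 * w s + c 0 * s + cd 0/2 * s^2)) from by
          rw [Function.iterate_succ_apply, Function.iterate_one]]
        rw [d71]
        have l72 : HasDerivAt (fun x => -(w 0*(c x*w x)) - v 0*(c x*v x) + c 0 + cd 0*x) 0 0 := by
          have h := (((((hc 0).mul (hw 0)).const_mul (w 0)).neg.sub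
            (((hc 0).mul (hv 0)).const_mul (v 0))).add_const (c 0)).add
            ((hasDerivAt_id 0).const_mul (cd 0))
          refine h.congr_deriv (Eq.symm ?_)
          linear_combination (cd 0) * hu
        exact l72.deriv)
  -- F6
  have l81 : ∀ x, HasDerivAt (fun s => v 0 * v s + w 0 * w s - 1 + c 0^2/2 * s^2)
      (-(v 0*(c x*w x)) + w 0*(c x*v x) + c 0^2*x) x := by
    intro x
    have h := ((((hv x).const_mul (v 0)).add ((hw x).const_mul (w 0))).sub_const 1).add
      ((hasDerivAt_pow 2 x).const_mul (c 0^2/2))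
    refine h.congr_deriv (Eq.symm ?_)
    ring
  have d81 : deriv (fun s => v 0 * v s + w 0 * w s - 1 + c 0^2/2 * s^2)
      = fun x => -(v 0*(c x*w x)) + w 0*(c x*v x) + c 0^2*x := funext fun x => (l81 x).deriv
  obtain ⟨C8, hC8pos, hC8⟩ := poly_bound 3
    (fun s => v 0 * v s + w 0 * w s - 1 + c 0^2/2 * s^2)
    (by fun_prop) (by
      intro j hj
      interval_cases j
      · show v 0 * v 0 + w 0 * w 0 - 1 + c 0^2/2 * 0^2 = 0
        linear_combination hu
      · simp only [Function.iterate_one, d81]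
        show -(v 0*(c 0*w 0)) + w 0*(c 0*v 0) + c 0^2*0 = 0
        ring
      · rw [show deriv^[2] (fun s => v 0 * v s + w 0 * w s - 1 + c 0^2/2 * s^2)
            = deriv (deriv (fun s => v 0 * v s + w 0 * w s - 1 + c 0^2/2 * s^2)) from by
          rw [Function.iterate_succ_apply, Function.iterate_one]]
        rw [d81]
        have l82 : HasDerivAt (fun x => -(v 0*(c x*w x)) + w 0*(c x*v x) + c 0^2*x) 0 0 := by
          have h := ((((hc 0).mul (hw 0)).const_mul (v 0)).neg.add
            (((hc 0).mul (hv 0)).const_mul (w 0))).add ((hasDerivAt_id 0).const_mul (c 0^2))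
          refine h.congr_deriv (Eq.symm ?_)
          linear_combination (c 0^2) * hu
        exact l82.deriv)
  refine ⟨C1+2*C2+C3+C4+C5+C6+C7+C8, by linarith, fun h hh s hs => ?_⟩
  have h4 := pow_nonneg (abs_nonneg s) 4
  have h3 := pow_nonneg (abs_nonneg s) 3
  have b1 := hC1 s hs
  have b2 := hC2 s hs
  have b3 := hC3 s hs
  have b4 := hC4 s hs
  have b5 := hC5 s hs
  have b6 := hC6 s hs
  have b7 := hC7 s hs
  have b8 := hC8 s hs
  refine ⟨?_, ?_, ?_, ?_, ?_, ?_, ?_, ?_⟩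
  · calc |p s^2 + q s^2 - s^2 + 2*h*(p s * w 0 - q s * v 0 - c 0/2 * s^2 - cd 0/6 * s^3)|
        ≤ |p s^2 + q s^2 - s^2| + |2*h*(p s * w 0 - q s * v 0 - c 0/2 * s^2 - cd 0/6 * s^3)| :=
          abs_add_le _ _
      _ ≤ C1 * |s|^4 + 2*(C2 * |s|^4) := by
          have hm : |2*h*(p s * w 0 - q s * v 0 - c 0/2 * s^2 - cd 0/6 * s^3)|
              ≤ 2*(C2 * |s|^4) := by
            rw [abs_mul, abs_mul]
            have h2 : |(2:ℝ)| = 2 := by norm_num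
            rw [h2]
            nlinarith [mul_le_mul hh b2 (abs_nonneg _) zero_le_one]
          linarith
      _ ≤ (C1+2*C2+C3+C4+C5+C6+C7+C8) * |s|^4 := by
          nlinarith [mul_nonneg (by linarith : (0:ℝ) ≤ C3+C4+C5+C6+C7+C8) h4]
  · calc _ ≤ C2 * |s|^4 := b2
      _ ≤ _ := mul_le_mul_of_nonneg_right (by linarith) h4
  · calc |p s * w s - q s * v s + c 0/2 * s^2 + h*(w 0 * w s + v 0 * v s - 1 + c 0^2/2 * s^2)|
        ≤ |p s * w s - q s * v s + c 0/2 * s^2| + |h*(w 0 * w s + v 0 * v s - 1 + c 0^2/2 * s^2)| :=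
          abs_add_le _ _
      _ ≤ C3 * |s|^3 + C4 * |s|^3 := by
          have hm : |h*(w 0 * w s + v 0 * v s - 1 + c 0^2/2 * s^2)| ≤ C4 * |s|^3 := by
            rw [abs_mul]
            nlinarith [mul_le_mul hh b4 (abs_nonneg _) zero_le_one]
          linarith
      _ ≤ (C1+2*C2+C3+C4+C5+C6+C7+C8) * |s|^3 := by
          nlinarith [mul_nonneg (by linarith : (0:ℝ) ≤ C1+2*C2+C5+C6+C7+C8) h3]
  · calc _ ≤ C5 * |s|^4 := b5
      _ ≤ _ := mul_le_mul_of_nonneg_right (by linarith) h4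
  · calc |p s * v s + q s * w s + s + h*(w 0 * v s - v 0 * w s + c 0 * s + cd 0/2 * s^2)|
        ≤ |p s * v s + q s * w s + s| + |h*(w 0 * v s - v 0 * w s + c 0 * s + cd 0/2 * s^2)| :=
          abs_add_le _ _
      _ ≤ C6 * |s|^3 + C7 * |s|^3 := by
          have hm : |h*(w 0 * v s - v 0 * w s + c 0 * s + cd 0/2 * s^2)| ≤ C7 * |s|^3 := by
            rw [abs_mul]
            nlinarith [mul_le_mul hh b7 (abs_nonneg _) zero_le_one]
          linarith
      _ ≤ (C1+2*C2+C3+C4+C5+C6+C7+C8) * |s|^3 := by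
          nlinarith [mul_nonneg (by linarith : (0:ℝ) ≤ C1+2*C2+C3+C4+C5+C8) h3]
  · calc _ ≤ C4 * |s|^3 := b4
      _ ≤ _ := mul_le_mul_of_nonneg_right (by linarith) h3
  · calc _ ≤ C8 * |s|^3 := b8
      _ ≤ _ := mul_le_mul_of_nonneg_right (by linarith) h3
  · calc _ ≤ C7 * |s|^3 := b7
      _ ≤ _ := mul_le_mul_of_nonneg_right (by linarith) h3

set_option maxHeartbeats 1000000 in
theorem stmt12 (L : ℝ) (hL : 0 < L) (γ : ℝ → ℝ × ℝ)
    (hγ : ContDiff ℝ (⊤ : ℕ∞) γ)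
    (hper : ∀ s, γ (s + L) = γ s)
    (hinj : Set.InjOn γ (Set.Ico 0 L))
    (harc : ∀ s, dot2 (deriv γ s) (deriv γ s) = 1)
    (t : ℝ) :
    ∃ h₀ > (0 : ℝ), ∃ s₀ > (0 : ℝ), ∃ C > (0 : ℝ),
      ∀ h : ℝ, |h| ≤ h₀ → ∀ s : ℝ, |s| ≤ s₀ →
        (|dot2 (γ t + h • nor γ t - γ (t + s)) (γ t + h • nor γ t - γ (t + s))
            - h ^ 2 - s ^ 2 * (1 + h * curv γ t) - h / 3 * deriv (curv γ) t * s ^ 3|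
          ≤ C * s ^ 4) ∧
        (|dot2 (γ t + h • nor γ t - γ (t + s)) (nor γ t)
            - h - curv γ t / 2 * s ^ 2 - deriv (curv γ) t / 6 * s ^ 3| ≤ C * s ^ 4) ∧
        (|dot2 (γ t + h • nor γ t - γ (t + s)) (nor γ (t + s))
            - h + s ^ 2 / 2 * (curv γ t + h * (curv γ t) ^ 2)| ≤ C * |s| ^ 3) ∧
        (|dot2 (γ t + h • nor γ t - γ (t + s)) (tang γ t)
            + s - (curv γ t) ^ 2 / 6 * s ^ 3| ≤ C * s ^ 4) ∧
        (|dot2 (γ t + h • nor γ t - γ (t + s)) (tang γ (t + s))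
            + (1 + h * curv γ t) * s + s ^ 2 / 2 * h * deriv (curv γ) t| ≤ C * |s| ^ 3) ∧
        (|dot2 (nor γ t) (nor γ (t + s)) - 1 + (curv γ t) ^ 2 / 2 * s ^ 2| ≤ C * |s| ^ 3) ∧
        (|dot2 (tang γ t) (tang γ (t + s)) - 1 + (curv γ t) ^ 2 / 2 * s ^ 2| ≤ C * |s| ^ 3) ∧
        (|dot2 (nor γ t) (tang γ (t + s)) + curv γ t * s + deriv (curv γ) t / 2 * s ^ 2|
          ≤ C * |s| ^ 3) := by
  classical
  have hγd : Differentiable ℝ γ := hγ.differentiable (by simp)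
  have hγ1 : ContDiff ℝ (⊤:ℕ∞) (deriv γ) := (contDiff_infty_iff_deriv.mp hγ).2
  have hγ1d : Differentiable ℝ (deriv γ) := hγ1.differentiable (by simp)
  have hγ2 : ContDiff ℝ (⊤:ℕ∞) (deriv (deriv γ)) := (contDiff_infty_iff_deriv.mp hγ1).2
  have hT1 : ∀ u, HasDerivAt (fun y => (γ y).1) ((deriv γ u).1) u := fun u => by
    simpa [Function.comp_def] using ((ContinuousLinearMap.fst ℝ ℝ ℝ).hasFDerivAt.comp u
      (hγd u).hasDerivAt.hasFDerivAt).hasDerivAt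
  have hT2 : ∀ u, HasDerivAt (fun y => (γ y).2) ((deriv γ u).2) u := fun u => by
    simpa [Function.comp_def] using ((ContinuousLinearMap.snd ℝ ℝ ℝ).hasFDerivAt.comp u
      (hγd u).hasDerivAt.hasFDerivAt).hasDerivAt
  have hD1 : ∀ u, HasDerivAt (fun y => (deriv γ y).1) ((deriv (deriv γ) u).1) u := fun u => by
    simpa [Function.comp_def] using ((ContinuousLinearMap.fst ℝ ℝ ℝ).hasFDerivAt.comp u
      (hγ1d u).hasDerivAt.hasFDerivAt).hasDerivAt
  have hD2 : ∀ u, HasDerivAt (fun y => (deriv γ y).2) ((deriv (deriv γ) u).2) u := fun u => by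
    simpa [Function.comp_def] using ((ContinuousLinearMap.snd ℝ ℝ ℝ).hasFDerivAt.comp u
      (hγ1d u).hasDerivAt.hasFDerivAt).hasDerivAt
  have hunit : ∀ u, (deriv γ u).1^2 + (deriv γ u).2^2 = 1 := fun u => by
    have := harc u
    simp only [dot2] at this
    linear_combination this
  have horth : ∀ u, 2*((deriv γ u).1)^1*((deriv (deriv γ) u).1)
      + 2*((deriv γ u).2)^1*((deriv (deriv γ) u).2) = 0 := fun u => by
    have hcomb : HasDerivAt (fun y => ((deriv γ y).1)^2 + ((deriv γ y).2)^2) _ u :=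
      ((hD1 u).pow 2).add ((hD2 u).pow 2)
    have hfun : (fun y => ((deriv γ y).1)^2 + ((deriv γ y).2)^2) = fun _ => (1:ℝ) :=
      funext fun y => hunit y
    rw [hfun] at hcomb
    exact hcomb.unique (hasDerivAt_const u 1)
  have kdef : ∀ u, curv γ u = -((deriv (deriv γ) u).1*(deriv γ u).2
      + (deriv (deriv γ) u).2*(-(deriv γ u).1)) := fun u => rfl
  have ode1 : ∀ u, (deriv (deriv γ) u).1 = -(curv γ u * (deriv γ u).2) := fun u => by
    rw [kdef u]
    linear_combination (-(deriv (deriv γ) u).1) * hunit u + ((deriv γ u).1/2) * horth u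
  have ode2 : ∀ u, (deriv (deriv γ) u).2 = curv γ u * (deriv γ u).1 := fun u => by
    rw [kdef u]
    linear_combination (-(deriv (deriv γ) u).2) * hunit u + ((deriv γ u).2/2) * horth u
  have hcurv : ContDiff ℝ (⊤:ℕ∞) (curv γ) := by
    have h : ContDiff ℝ (⊤:ℕ∞) (fun u => -((deriv (deriv γ) u).1*(deriv γ u).2
        + (deriv (deriv γ) u).2*(-(deriv γ u).1))) := by
      exact ((hγ2.fst.mul hγ1.snd).add (hγ2.snd.mul hγ1.fst.neg)).neg
    have he : curv γ = fun u => -((deriv (deriv γ) u).1*(deriv γ u).2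
        + (deriv (deriv γ) u).2*(-(deriv γ u).1)) := funext kdef
    rw [he]
    exact h
  have hcd : ∀ u, HasDerivAt (curv γ) (deriv (curv γ) u) u := fun u =>
    (hcurv.differentiable (by simp) u).hasDerivAt
  have shift : ∀ x : ℝ, HasDerivAt (fun s : ℝ => t + s) 1 x := fun x => by
    simpa using (hasDerivAt_id x).const_add t
  have hAd : ∀ x, HasDerivAt (fun s => (γ (t+s)).1) ((deriv γ (t+x)).1) x := fun x => by
    simpa [Function.comp_def] using (hT1 (t+x)).comp x (shift x)
  have hBd : ∀ x, HasDerivAt (fun s => (γ (t+s)).2) ((deriv γ (t+x)).2) x := fun x => by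
    simpa [Function.comp_def] using (hT2 (t+x)).comp x (shift x)
  have hvd : ∀ x, HasDerivAt (fun s => (deriv γ (t+s)).1)
      (-(curv γ (t+x) * (deriv γ (t+x)).2)) x := fun x => by
    have h := (hD1 (t+x)).comp x (shift x)
    rw [ode1 (t+x)] at h
    simpa [Function.comp_def] using h
  have hwd : ∀ x, HasDerivAt (fun s => (deriv γ (t+s)).2)
      (curv γ (t+x) * (deriv γ (t+x)).1) x := fun x => by
    have h := (hD2 (t+x)).comp x (shift x)
    rw [ode2 (t+x)] at h
    simpa [Function.comp_def] using h
  have hcs : ∀ x, HasDerivAt (fun s => curv γ (t+s)) (deriv (curv γ) (t+x)) x := fun x => by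
    simpa [Function.comp_def] using (hcd (t+x)).comp x (shift x)
  have hshift : ContDiff ℝ (⊤:ℕ∞) (fun s : ℝ => t + s) := contDiff_const.add contDiff_id
  have hp : ∀ x, HasDerivAt (fun s => (γ t).1 - (γ (t+s)).1) (-((deriv γ (t+x)).1)) x :=
    fun x => (hAd x).const_sub _
  have hq : ∀ x, HasDerivAt (fun s => (γ t).2 - (γ (t+s)).2) (-((deriv γ (t+x)).2)) x :=
    fun x => (hBd x).const_sub _
  obtain ⟨C₀, hC₀, hbd⟩ := curveEst
    (fun s => (γ t).1 - (γ (t+s)).1) (fun s => (γ t).2 - (γ (t+s)).2)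
    (fun s => (deriv γ (t+s)).1) (fun s => (deriv γ (t+s)).2)
    (fun s => curv γ (t+s)) (fun s => deriv (curv γ) (t+s))
    (contDiff_const.sub (hγ.fst.comp hshift)) (contDiff_const.sub (hγ.snd.comp hshift))
    (hγ1.fst.comp hshift) (hγ1.snd.comp hshift) (hcurv.comp hshift)
    hp hq hvd hwd hcs (fun x => hunit (t+x)) (by simp) (by simp)
  refine ⟨1, one_pos, 1, one_pos, C₀, hC₀, fun h hh s hs => ?_⟩
  obtain ⟨B1, B2, B3, B4, B5, B6, B7, B8⟩ := hbd h hh s hs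
  simp only [add_zero] at B1 B2 B3 B4 B5 B6 B7 B8
  have hab : (deriv γ t).1^2 + (deriv γ t).2^2 = 1 := hunit t
  have habs4 : |s|^4 = s^4 := by
    rw [← abs_pow]
    exact abs_of_nonneg (by positivity)
  rw [habs4] at B1 B2 B4
  refine ⟨?_, ?_, ?_, ?_, ?_, ?_, ?_, ?_⟩
  · convert B1 using 2
    simp only [dot2, nor, tang, Prod.fst_add, Prod.snd_add, Prod.fst_sub, Prod.snd_sub,
      Prod.smul_fst, Prod.smul_snd, smul_eq_mul]
    linear_combination h^2 * hab
  · convert B2 using 2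
    simp only [dot2, nor, tang, Prod.fst_add, Prod.snd_add, Prod.fst_sub, Prod.snd_sub,
      Prod.smul_fst, Prod.smul_snd, smul_eq_mul]
    linear_combination h * hab
  · convert B3 using 2
    all_goals try simp only [dot2, nor, tang, Prod.fst_add, Prod.snd_add, Prod.fst_sub,
      Prod.snd_sub, Prod.smul_fst, Prod.smul_snd, smul_eq_mul]
    all_goals try ring
  · convert B4 using 2
    all_goals try simp only [dot2, nor, tang, Prod.fst_add, Prod.snd_add, Prod.fst_sub,
      Prod.snd_sub, Prod.smul_fst, Prod.smul_snd, smul_eq_mul]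
    all_goals try ring
  · convert B5 using 2
    all_goals try simp only [dot2, nor, tang, Prod.fst_add, Prod.snd_add, Prod.fst_sub,
      Prod.snd_sub, Prod.smul_fst, Prod.smul_snd, smul_eq_mul]
    all_goals try ring
  · convert B6 using 2
    all_goals try simp only [dot2, nor, tang, Prod.fst_add, Prod.snd_add, Prod.fst_sub,
      Prod.snd_sub, Prod.smul_fst, Prod.smul_snd, smul_eq_mul]
    all_goals try ring
  · convert B7 using 2
    all_goals try simp only [dot2, nor, tang, Prod.fst_add, Prod.snd_add, Prod.fst_sub,
      Prod.snd_sub, Prod.smul_fst, Prod.smul_snd, smul_eq_mul]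
    all_goals try ring
  · convert B8 using 2
    all_goals try simp only [dot2, nor, tang, Prod.fst_add, Prod.snd_add, Prod.fst_sub,
      Prod.snd_sub, Prod.smul_fst, Prod.smul_snd, smul_eq_mul]
    all_goals try ring
end
end

section
/- (No-jump relation for the clamped-plate layer potential K₂, biharmonic part.) Let σ : ℝ → ℝ be infinitely differentiable with σ(s+L) = σ(s) for all s, and fix t ∈ ℝ. Define K(x, γ(s)) = (1/(4π))·[(r·τ(s))² − (r·n(s))²]/‖r‖² with r = x − γ(s) (this kernel equals −G^B_{n_y n_y} + G^B_{τ_y τ_y}). Then there is h₀ > 0 such that for 0 < |h| < h₀ the point γ(t) + h·n(t) does not lie on the curve, the function s ↦ K(γ(t), γ(s))·σ(s) is bounded on [0, L], and lim_{h→0, h≠0} ∫₀^L K(γ(t)+h·n(t), γ(s))σ(s) ds = ∫₀^L K(γ(t), γ(s))σ(s) ds (a two-sided limit with no jump). -/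
open Real Filter Topology MeasureTheory

noncomputable section

/-- The kernel `K(x, γ(s)) = −G^B_{n_y n_y} + G^B_{τ_y τ_y}`, given by its explicit
formula, with `r = x − γ(s)`. -/
def K12clamped (γ : ℝ → ℝ × ℝ) (x : ℝ × ℝ) (s : ℝ) : ℝ :=
  1 / (4 * π) * ((dot2 (x - γ s) (tang γ s)) ^ 2 - (dot2 (x - γ s) (nor γ s)) ^ 2)
    / dot2 (x - γ s) (x - γ s)

lemma dot2_self_pos {v : ℝ × ℝ} (hv : v ≠ 0) : 0 < dot2 v v := by
  have h : v.1 ≠ 0 ∨ v.2 ≠ 0 := by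
    by_contra hc; push_neg at hc; exact hv (Prod.ext hc.1 hc.2)
  simp only [dot2]
  rcases h with h | h
  · nlinarith [mul_self_pos.mpr h, mul_self_nonneg v.2]
  · nlinarith [mul_self_pos.mpr h, mul_self_nonneg v.1]

lemma Kabs (γ : ℝ → ℝ × ℝ) (x : ℝ × ℝ) (s : ℝ)
    (h1 : dot2 (deriv γ s) (deriv γ s) = 1) :
    |K12clamped γ x s| ≤ 1 / (4 * π) := by
  have hsum : dot2 (x - γ s) (x - γ s)
      = (dot2 (x - γ s) (tang γ s)) ^ 2 + (dot2 (x - γ s) (nor γ s)) ^ 2 := by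
    simp only [dot2, tang, nor] at h1 ⊢
    linear_combination (-((x - γ s).1 ^ 2 + (x - γ s).2 ^ 2)) * h1
  set A := dot2 (x - γ s) (tang γ s)
  set B := dot2 (x - γ s) (nor γ s)
  have hc : (0:ℝ) < 1 / (4 * π) := by positivity
  rcases eq_or_lt_of_le (show (0:ℝ) ≤ A ^ 2 + B ^ 2 by positivity) with h0 | hpos
  · simp only [K12clamped, hsum, ← h0, div_zero, abs_zero]
    exact hc.le
  · have habs : |A ^ 2 - B ^ 2| ≤ A ^ 2 + B ^ 2 := by
      rw [abs_le]; constructor <;> nlinarith [sq_nonneg A, sq_nonneg B]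
    rw [K12clamped, hsum, abs_div, abs_mul, abs_of_pos hc, abs_of_pos hpos,
      div_le_iff₀ hpos]
    calc 1 / (4 * π) * |A ^ 2 - B ^ 2| ≤ 1 / (4 * π) * (A ^ 2 + B ^ 2) :=
          mul_le_mul_of_nonneg_left habs hc.le
      _ = _ := by ring

theorem stmt17 (L : ℝ) (hL : 0 < L) (γ : ℝ → ℝ × ℝ)
    (hγ : ContDiff ℝ (⊤ : ℕ∞) γ)
    (hper : ∀ s, γ (s + L) = γ s)
    (hinj : Set.InjOn γ (Set.Ico 0 L))
    (harc : ∀ s, dot2 (deriv γ s) (deriv γ s) = 1)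
    (σ : ℝ → ℝ) (hσ : ContDiff ℝ (⊤ : ℕ∞) σ) (hσper : ∀ s, σ (s + L) = σ s)
    (t : ℝ) :
    ∃ h₀ > (0 : ℝ),
      (∀ h : ℝ, 0 < |h| → |h| < h₀ → ∀ s : ℝ, γ t + h • nor γ t ≠ γ s) ∧
      (∃ M : ℝ, ∀ s ∈ Set.Icc (0 : ℝ) L, |K12clamped γ (γ t) s * σ s| ≤ M) ∧
      Tendsto
        (fun h : ℝ => ∫ s in (0 : ℝ)..L, K12clamped γ (γ t + h • nor γ t) s * σ s)
        (𝓝[≠] (0 : ℝ))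
        (𝓝 (∫ s in (0 : ℝ)..L, K12clamped γ (γ t) s * σ s)) := by
  classical
  have hdiff : Differentiable ℝ γ := hγ.differentiable (by simp)
  have hdc : Continuous (deriv γ) := (contDiff_infty_iff_deriv.mp hγ).2.continuous
  have hcγ : Continuous γ := hγ.continuous
  have hp : Function.Periodic γ L := hper
  have hZ : ∀ (k : ℤ) (s : ℝ), γ (s + k * L) = γ s := fun k s => (hp.int_mul k) s
  -- if two parameters give the same point, they differ by a multiple of L
  have hmod : ∀ a b, γ a = γ b → ∃ k : ℤ, a - b = k * L := by
    intro a b hab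
    have key : ∀ c : ℝ, γ (L * Int.fract (c / L)) = γ c := by
      intro c
      have : L * Int.fract (c / L) = c + (-⌊c / L⌋ : ℤ) * L := by
        rw [Int.fract]; push_cast; field_simp; ring
      rw [this, hZ]
    have hmem : ∀ c : ℝ, L * Int.fract (c / L) ∈ Set.Ico (0:ℝ) L := by
      intro c
      refine ⟨mul_nonneg hL.le (Int.fract_nonneg _), ?_⟩
      calc L * Int.fract (c / L) < L * 1 := (mul_lt_mul_iff_right₀ hL).mpr (Int.fract_lt_one _)
        _ = L := mul_one L
    have heq : L * Int.fract (a / L) = L * Int.fract (b / L) := by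
      apply hinj (hmem a) (hmem b)
      rw [key a, key b, hab]
    refine ⟨⌊a / L⌋ - ⌊b / L⌋, ?_⟩
    have h1 : Int.fract (a / L) = Int.fract (b / L) := by
      exact mul_left_cancel₀ hL.ne' heq
    rw [Int.fract, Int.fract] at h1
    push_cast
    have h2 : a / L - ↑⌊a / L⌋ = b / L - ↑⌊b / L⌋ := h1
    field_simp at h2 ⊢
    linarith [h2]
  -- derivative of the tangential coordinate function
  have hg : ∀ (v : ℝ × ℝ) (s : ℝ),
      HasDerivAt (fun u => dot2 (γ u - γ t) v) (dot2 (deriv γ s) v) s := by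
    intro v s
    have h := (hdiff s).hasDerivAt
    have h1 : HasDerivAt (fun u => (γ u).1) ((deriv γ s).1) s := h.fst
    have h2 : HasDerivAt (fun u => (γ u).2) ((deriv γ s).2) s := h.snd
    have := (((h1.sub_const (γ t).1).mul_const v.1).add
      ((h2.sub_const (γ t).2).mul_const v.2))
    exact this
  -- choose δ so that the tangential derivative is positive near t
  set gd : ℝ → ℝ := fun s => dot2 (deriv γ s) (tang γ t) with hgd_def
  have hgdc : Continuous gd := by
    simp only [hgd_def, dot2, tang]; fun_prop
  have hgdt : gd t = 1 := harc t
  have hU : IsOpen (gd ⁻¹' Set.Ioi 0) := (isOpen_Ioi).preimage hgdc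
  have htU : t ∈ gd ⁻¹' Set.Ioi 0 := by simp [hgdt]
  obtain ⟨ε, hε, hball⟩ := Metric.mem_nhds_iff.mp (hU.mem_nhds htU)
  set δ : ℝ := min (ε / 2) (L / 2) with hδ_def
  have hδpos : 0 < δ := lt_min (by linarith) (by linarith)
  have hδL : δ ≤ L / 2 := min_le_right _ _
  have hIccU : Set.Icc (t - δ) (t + δ) ⊆ gd ⁻¹' Set.Ioi 0 := by
    intro u hu
    apply hball
    rw [Metric.mem_ball, Real.dist_eq]
    have h1 : δ ≤ ε / 2 := min_le_left _ _
    have h2 : |u - t| ≤ δ := by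
      rw [abs_le]; exact ⟨by linarith [hu.1], by linarith [hu.2]⟩
    linarith
  -- the tangential coordinate is strictly monotone near t
  set g : ℝ → ℝ := fun u => dot2 (γ u - γ t) (tang γ t) with hg_def
  have hgc : Continuous g := by
    simp only [hg_def, dot2, tang, Prod.fst_sub, Prod.snd_sub]; fun_prop
  have hgt : g t = 0 := by simp [hg_def, dot2]
  have hmono : StrictMonoOn g (Set.Icc (t - δ) (t + δ)) := by
    apply strictMonoOn_of_deriv_pos (convex_Icc _ _) hgc.continuousOn
    intro u hu
    rw [interior_Icc] at hu
    rw [(hg (tang γ t) u).deriv]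
    exact hIccU ⟨hu.1.le, hu.2.le⟩
  -- minimum of squared distance on the far arc
  have hSne : (Set.Icc (t + δ) (t + L - δ)).Nonempty := Set.nonempty_Icc.mpr (by linarith)
  have hfc : ContinuousOn (fun u => dot2 (γ u - γ t) (γ u - γ t)) (Set.Icc (t + δ) (t + L - δ)) := by
    apply Continuous.continuousOn
    simp only [dot2, Prod.fst_sub, Prod.snd_sub]; fun_prop
  obtain ⟨s₀, hs₀, hmin⟩ := isCompact_Icc.exists_isMinOn hSne hfc
  have hd0 : 0 < dot2 (γ s₀ - γ t) (γ s₀ - γ t) := by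
    apply dot2_self_pos
    rw [sub_ne_zero]
    intro heq
    obtain ⟨k, hk⟩ := hmod s₀ t heq
    rcases le_or_gt k 0 with hk0 | hk0
    · have : (k : ℝ) * L ≤ 0 := mul_nonpos_of_nonpos_of_nonneg (by exact_mod_cast hk0) hL.le
      have := hs₀.1; linarith
    · have hk1 : (1 : ℝ) ≤ (k : ℝ) := by exact_mod_cast hk0
      have : L ≤ (k : ℝ) * L := le_mul_of_one_le_left hL.le hk1
      have := hs₀.2; linarith
  set d : ℝ := dot2 (γ s₀ - γ t) (γ s₀ - γ t) with hd_def
  refine ⟨Real.sqrt d, Real.sqrt_pos.mpr hd0, ?_, ?_, ?_⟩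
  · -- Part 1: the point is off the curve
    intro h hh hlt s heq
    set u : ℝ := L * Int.fract ((s - t) / L) with hu_def
    have hu0 : 0 ≤ u := mul_nonneg hL.le (Int.fract_nonneg _)
    have huL : u < L := by
      calc u < L * 1 := (mul_lt_mul_iff_right₀ hL).mpr (Int.fract_lt_one _)
        _ = L := mul_one L
    have hγs : γ (t + u) = γ s := by
      have : t + u = s + (-⌊(s - t) / L⌋ : ℤ) * L := by
        rw [hu_def, Int.fract]; push_cast; field_simp; ring
      rw [this, hZ]
    have key : γ (t + u) - γ t = h • nor γ t := by
      rw [hγs, ← heq, add_sub_cancel_left]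
    have h1 := harc t
    simp only [dot2] at h1
    have hN : dot2 (γ (t + u) - γ t) (γ (t + u) - γ t) = h ^ 2 := by
      rw [key]
      simp only [dot2, nor, Prod.smul_fst, Prod.smul_snd, smul_eq_mul]
      linear_combination h ^ 2 * h1
    have hg0 : g (t + u) = 0 := by
      simp only [hg_def]
      rw [key]
      simp only [dot2, nor, tang, Prod.smul_fst, Prod.smul_snd, smul_eq_mul]
      ring
    have htm : t ∈ Set.Icc (t - δ) (t + δ) := ⟨by linarith, by linarith⟩
    rcases le_or_gt u δ with hcase | hcase
    · -- near (right side)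
      have hmem : t + u ∈ Set.Icc (t - δ) (t + δ) := ⟨by linarith, by linarith⟩
      have hut : t + u = t := hmono.injOn hmem htm (by rw [hg0, hgt])
      have hu0' : u = 0 := by linarith
      rw [hu0', add_zero, sub_self] at hN
      simp only [dot2, Prod.fst_zero, Prod.snd_zero, mul_zero, add_zero] at hN
      have : h = 0 := by nlinarith
      rw [this] at hh; simp at hh
    rcases le_or_gt (L - δ) u with hcase2 | hcase2
    · -- near (left side), shift by -L
      have hγs2 : γ (t + (u - L)) = γ (t + u) := by
        have : t + (u - L) = (t + u) + (-1 : ℤ) * L := by push_cast; ring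
        rw [this, hZ]
      have hg0' : g (t + (u - L)) = 0 := by
        have h2 : g (t + (u - L)) = g (t + u) := by
          simp only [hg_def]; rw [hγs2]
        rw [h2, hg0]
      have hmem : t + (u - L) ∈ Set.Icc (t - δ) (t + δ) := ⟨by linarith, by linarith⟩
      have hut : t + (u - L) = t := hmono.injOn hmem htm (by rw [hg0', hgt])
      have : u = L := by linarith
      linarith
    · -- far case
      have hmemS : t + u ∈ Set.Icc (t + δ) (t + L - δ) := ⟨by linarith, by linarith⟩
      have hle := hmin hmemS
      simp only [Set.mem_setOf_eq] at hle
      have h2 : d ≤ h ^ 2 := by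
        rw [← hN]; exact hle
      have h3 : h ^ 2 < d := by
        calc h ^ 2 = |h| ^ 2 := (sq_abs h).symm
          _ < Real.sqrt d ^ 2 := by
              apply pow_lt_pow_left₀ hlt (abs_nonneg h)
              norm_num
          _ = d := Real.sq_sqrt hd0.le
      linarith
  · -- Part 2: boundedness on the curve
    obtain ⟨C, hC⟩ := isCompact_Icc.exists_bound_of_continuousOn hσ.continuous.continuousOn
    refine ⟨1 / (4 * π) * C, fun s hs => ?_⟩
    rw [abs_mul]
    have h1 := Kabs γ (γ t) s (harc s)
    have h2 := hC s hs
    rw [Real.norm_eq_abs] at h2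
    exact mul_le_mul h1 h2 (abs_nonneg _) (by positivity)
  · -- Part 3: no-jump limit
    obtain ⟨C, hC⟩ := isCompact_Icc.exists_bound_of_continuousOn
      (s := Set.Icc (0:ℝ) L) hσ.continuous.continuousOn
    simp only [intervalIntegral.integral_of_le hL.le]
    haveI : IsFiniteMeasure (volume.restrict (Set.Ioc (0:ℝ) L)) := by
      constructor
      rw [Measure.restrict_apply_univ]
      simp [Real.volume_Ioc]
    have hmeas : ∀ x : ℝ × ℝ, Measurable fun s => K12clamped γ x s * σ s := by
      intro x
      have hnum : Continuous fun s =>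
          1 / (4 * π) * ((dot2 (x - γ s) (tang γ s)) ^ 2 - (dot2 (x - γ s) (nor γ s)) ^ 2) := by
        simp only [dot2, tang, nor, Prod.fst_sub, Prod.snd_sub]
        fun_prop
      have hden : Continuous fun s => dot2 (x - γ s) (x - γ s) := by
        simp only [dot2, Prod.fst_sub, Prod.snd_sub]; fun_prop
      exact (hnum.measurable.div hden.measurable).mul hσ.continuous.measurable
    apply tendsto_integral_filter_of_dominated_convergence (bound := fun _ => 1 / (4 * π) * C)
    · exact Eventually.of_forall fun h => (hmeas _).aestronglyMeasurable
    · refine Eventually.of_forall fun h => ?_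
      refine (ae_restrict_mem measurableSet_Ioc).mono fun s hs => ?_
      have hs' : s ∈ Set.Icc (0:ℝ) L := ⟨hs.1.le, hs.2⟩
      rw [Real.norm_eq_abs, abs_mul]
      have h1 := Kabs γ (γ t + h • nor γ t) s (harc s)
      have h2 := hC s hs'
      rw [Real.norm_eq_abs] at h2
      exact mul_le_mul h1 h2 (abs_nonneg _) (by positivity)
    · exact integrable_const _
    · -- a.e. pointwise convergence
      have hZcount : {s : ℝ | γ s = γ t}.Countable := by
        apply Set.Countable.mono ?_ (Set.countable_range fun k : ℤ => t + (k : ℝ) * L)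
        intro s hs
        obtain ⟨k, hk⟩ := hmod s t hs
        refine ⟨k, ?_⟩
        show t + (k : ℝ) * L = s
        linarith
      have hnull : volume {s : ℝ | γ s = γ t} = 0 := hZcount.measure_zero _
      have hae : ∀ᵐ s : ℝ, γ s ≠ γ t := by
        rw [ae_iff]
        simpa using hnull
      apply ae_restrict_of_ae
      filter_upwards [hae] with s hs
      have hne : dot2 (γ t - γ s) (γ t - γ s) ≠ 0 :=
        (dot2_self_pos (sub_ne_zero.mpr (Ne.symm hs))).ne'
      have hx : ContinuousAt (fun x => K12clamped γ x s) (γ t) := by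
        apply ContinuousAt.div
        · apply Continuous.continuousAt
          simp only [dot2, tang, nor, Prod.fst_sub, Prod.snd_sub]
          fun_prop
        · apply Continuous.continuousAt
          simp only [dot2, Prod.fst_sub, Prod.snd_sub]
          fun_prop
        · exact hne
      have hmap : Tendsto (fun h : ℝ => γ t + h • nor γ t) (𝓝[≠] (0:ℝ)) (𝓝 (γ t)) := by
        have hcm : Continuous fun h : ℝ => γ t + h • nor γ t := by fun_prop
        have := (hcm.tendsto 0).mono_left (nhdsWithin_le_nhds (s := {(0:ℝ)}ᶜ))
        simpa using this
      exact (hx.tendsto.comp hmap).mul tendsto_const_nhds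
end
end
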